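/- Let W be a split real quadratic space, 𝒮 an irreducible module over Cl(W), and E ⊂ W a Lagrangian subspace. Then the subspace 𝒮^E = {φ ∈ 𝒮 : ρ(w)φ = 0 for all w ∈ E} is one-dimensional. -/

import Mathlib

open CliffordAlgebra

namespace Stmt13Aux

variable {W : Type*} [AddCommGroup W] [Module ℝ W] (Q : QuadraticForm ℝ W)
variable (n : ℕ) (e f : ℕ → W)

/-- The idempotent product `p_{m-1} ⋯ p_0` where `p_i = ι(e i) * ι(f i)`. -/
noncomputable def clPi : ℕ → CliffordAlgebra Q
  | 0 => 1
  | m + 1 => (ι Q (e m) * ι Q (f m)) * clPi m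

structure ClSetup : Prop where
  hee : ∀ i j, ι Q (e i) * ι Q (e j) = -(ι Q (e j) * ι Q (e i))
  hff : ∀ i j, ι Q (f i) * ι Q (f j) = -(ι Q (f j) * ι Q (f i))
  hef : ∀ i j, ι Q (e i) * ι Q (f j) =
    -(ι Q (f j) * ι Q (e i)) + algebraMap ℝ _ (if i = j ∧ i < n then 1 else 0)
  he0 : ∀ i, ι Q (e i) * ι Q (e i) = 0
  hf0 : ∀ i, ι Q (f i) * ι Q (f i) = 0
  hetop : ∀ i, n ≤ i → e i = 0
  hftop : ∀ i, n ≤ i → f i = 0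
  hspan : ∀ v : W, v ∈ Submodule.span ℝ (Set.range e ∪ Set.range f)

variable {Q n e f} (H : ClSetup Q n e f)

section Lemmas
include H

theorem hef_ne {i j : ℕ} (h : ¬(i = j ∧ i < n)) :
    ι Q (e i) * ι Q (f j) = -(ι Q (f j) * ι Q (e i)) := by
  have := H.hef i j
  rwa [if_neg h, map_zero, add_zero] at this

theorem hfe {i j : ℕ} (h : ¬(j = i ∧ j < n)) :
    ι Q (f i) * ι Q (e j) = -(ι Q (e j) * ι Q (f i)) := by
  rw [hef_ne H h, neg_neg]

/-- `ι (e i)` commutes with `p_j` for `i ≠ j`. -/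
theorem e_comm_p {i j : ℕ} (h : i ≠ j) :
    ι Q (e i) * (ι Q (e j) * ι Q (f j)) = (ι Q (e j) * ι Q (f j)) * ι Q (e i) := by
  rw [← mul_assoc, H.hee i j, neg_mul, mul_assoc, hef_ne H (by tauto), mul_neg, neg_neg,
    mul_assoc]

/-- `ι (f i)` commutes with `p_j` for `i ≠ j`. -/
theorem f_comm_p {i j : ℕ} (h : i ≠ j) :
    ι Q (f i) * (ι Q (e j) * ι Q (f j)) = (ι Q (e j) * ι Q (f j)) * ι Q (f i) := by
  rw [← mul_assoc, hfe H (by tauto), neg_mul, mul_assoc, H.hff i j, mul_neg, neg_neg, mul_assoc]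

theorem e_comm_clPi {i m : ℕ} (h : m ≤ i) :
    ι Q (e i) * clPi Q e f m = clPi Q e f m * ι Q (e i) := by
  induction m with
  | zero => simp [clPi]
  | succ m ih =>
    have hm : m ≤ i := Nat.le_of_succ_le h
    rw [clPi, ← mul_assoc, e_comm_p H (by omega), mul_assoc, ih hm, ← mul_assoc]

theorem f_comm_clPi {i m : ℕ} (h : m ≤ i) :
    ι Q (f i) * clPi Q e f m = clPi Q e f m * ι Q (f i) := by
  induction m with
  | zero => simp [clPi]
  | succ m ih =>
    have hm : m ≤ i := Nat.le_of_succ_le h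
    rw [clPi, ← mul_assoc, f_comm_p H (by omega), mul_assoc, ih hm, ← mul_assoc]

theorem e_mul_clPi {i m : ℕ} (h : i < m) :
    ι Q (e i) * clPi Q e f m = 0 := by
  induction m with
  | zero => omega
  | succ m ih =>
    rcases Nat.lt_succ_iff_lt_or_eq.mp h with h' | rfl
    · rw [clPi, ← mul_assoc, e_comm_p H (by omega), mul_assoc, ih h', mul_zero]
    · rw [clPi, ← mul_assoc, ← mul_assoc, H.he0 i, zero_mul, zero_mul]

theorem clPi_mul_f {i m : ℕ} (h : i < m) :
    clPi Q e f m * ι Q (f i) = 0 := by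
  induction m with
  | zero => omega
  | succ m ih =>
    rcases Nat.lt_succ_iff_lt_or_eq.mp h with h' | rfl
    · rw [clPi, mul_assoc, ih h', mul_zero]
    · rw [clPi, mul_assoc, ← f_comm_clPi H le_rfl, ← mul_assoc, mul_assoc _ _ (ι Q (f i)),
        H.hf0 i, mul_zero, zero_mul]

theorem hef_one {m : ℕ} (h : m < n) :
    ι Q (e m) * ι Q (f m) + ι Q (f m) * ι Q (e m) = 1 := by
  have := H.hef m m
  rw [if_pos ⟨rfl, h⟩, map_one] at this
  rw [this]; abel

theorem p_idem {m : ℕ} (h : m < n) :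
    (ι Q (e m) * ι Q (f m)) * (ι Q (e m) * ι Q (f m)) = ι Q (e m) * ι Q (f m) := by
  have h1 : ι Q (f m) * (ι Q (e m) * ι Q (f m)) = ι Q (f m) := by
    have h2 : ι Q (e m) * ι Q (f m) = 1 - ι Q (f m) * ι Q (e m) := by
      rw [eq_sub_iff_add_eq]; exact hef_one H h
    rw [h2, mul_sub, mul_one, ← mul_assoc, H.hf0 m, zero_mul, sub_zero]
  calc (ι Q (e m) * ι Q (f m)) * (ι Q (e m) * ι Q (f m))
      = ι Q (e m) * (ι Q (f m) * (ι Q (e m) * ι Q (f m))) := by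
        simp only [mul_assoc]
    _ = ι Q (e m) * ι Q (f m) := by rw [h1]

theorem clPi_comm_p {m : ℕ} :
    clPi Q e f m * (ι Q (e m) * ι Q (f m)) = (ι Q (e m) * ι Q (f m)) * clPi Q e f m := by
  rw [← mul_assoc, ← e_comm_clPi H le_rfl, mul_assoc, ← f_comm_clPi H le_rfl, ← mul_assoc]

theorem clPi_idem {m : ℕ} (h : m ≤ n) :
    clPi Q e f m * clPi Q e f m = clPi Q e f m := by
  induction m with
  | zero => simp [clPi]
  | succ m ih =>
    have hm : m ≤ n := Nat.le_of_succ_le h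
    rw [clPi]
    calc ((ι Q (e m) * ι Q (f m)) * clPi Q e f m) * ((ι Q (e m) * ι Q (f m)) * clPi Q e f m)
        = (ι Q (e m) * ι Q (f m)) * (clPi Q e f m * (ι Q (e m) * ι Q (f m))) * clPi Q e f m := by
          simp only [mul_assoc]
      _ = (ι Q (e m) * ι Q (f m)) * ((ι Q (e m) * ι Q (f m)) * clPi Q e f m) * clPi Q e f m := by
          rw [clPi_comm_p H]
      _ = ((ι Q (e m) * ι Q (f m)) * (ι Q (e m) * ι Q (f m))) * (clPi Q e f m * clPi Q e f m) := by
          simp only [mul_assoc]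
      _ = (ι Q (e m) * ι Q (f m)) * clPi Q e f m := by rw [p_idem H (by omega), ih hm]

end Lemmas

variable (Q e f)

noncomputable def prodE (T : List ℕ) : CliffordAlgebra Q := (T.map fun i => ι Q (e i)).prod
noncomputable def prodF (S : List ℕ) : CliffordAlgebra Q := (S.map fun i => ι Q (f i)).prod

def genSet : Set (CliffordAlgebra Q) :=
  {x | ∃ S T : List ℕ, x = prodF Q f S * prodE Q e T}

variable {Q e f}

section Lemmas2
include H

theorem span_gen : Submodule.span ℝ (genSet Q e f) = ⊤ := by
  set M := Submodule.span ℝ (genSet Q e f) with hM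
  have h1 : (1 : CliffordAlgebra Q) ∈ M :=
    Submodule.subset_span ⟨[], [], by simp [prodF, prodE]⟩
  have hF : ∀ i, ∀ x ∈ M, ι Q (f i) * x ∈ M := by
    intro i x hx
    induction hx using Submodule.span_induction with
    | mem x hx =>
      obtain ⟨S, T, rfl⟩ := hx
      exact Submodule.subset_span ⟨i :: S, T, by simp [prodF, mul_assoc]⟩
    | zero => rw [mul_zero]; exact M.zero_mem
    | add a b _ _ ha hb => rw [mul_add]; exact M.add_mem ha hb
    | smul c a _ ha => rw [mul_smul_comm]; exact M.smul_mem c ha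
  have hE : ∀ i (S T : List ℕ), ι Q (e i) * (prodF Q f S * prodE Q e T) ∈ M := by
    intro i S
    induction S with
    | nil =>
      intro T
      have : prodF Q f ([] : List ℕ) = 1 := by simp [prodF]
      rw [this, one_mul]
      exact Submodule.subset_span ⟨[], i :: T, by simp [prodF, prodE]⟩
    | cons s S' ih =>
      intro T
      have hs : prodF Q f (s :: S') = ι Q (f s) * prodF Q f S' := by simp [prodF]
      have key : ι Q (e i) * (prodF Q f (s :: S') * prodE Q e T)
          = -(ι Q (f s) * (ι Q (e i) * (prodF Q f S' * prodE Q e T)))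
            + (if i = s ∧ i < n then (1:ℝ) else 0) • (prodF Q f S' * prodE Q e T) := by
        rw [hs, mul_assoc, ← mul_assoc (ι Q (e i)), H.hef i s, add_mul, neg_mul,
          Algebra.smul_def]
        simp only [mul_assoc]
      rw [key]
      exact M.add_mem (M.neg_mem (hF s _ (ih T)))
        (M.smul_mem _ (Submodule.subset_span ⟨S', T, rfl⟩))
  have hEx : ∀ i, ∀ x ∈ M, ι Q (e i) * x ∈ M := by
    intro i x hx
    induction hx using Submodule.span_induction with
    | mem x hx => obtain ⟨S, T, rfl⟩ := hx; exact hE i S T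
    | zero => rw [mul_zero]; exact M.zero_mem
    | add a b _ _ ha hb => rw [mul_add]; exact M.add_mem ha hb
    | smul c a _ ha => rw [mul_smul_comm]; exact M.smul_mem c ha
  have hv : ∀ (v : W), ∀ x ∈ M, ι Q v * x ∈ M := by
    intro v x hx
    have hvN : v ∈ Submodule.comap ((LinearMap.mulRight ℝ x).comp (ι Q)) M := by
      refine Submodule.span_le.mpr ?_ (H.hspan v)
      rintro w (⟨i, rfl⟩ | ⟨i, rfl⟩)
      · exact hEx i x hx
      · exact hF i x hx
    exact hvN
  have hy : ∀ (y : CliffordAlgebra Q), ∀ x ∈ M, y * x ∈ M := by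
    intro y
    induction y using CliffordAlgebra.induction with
    | algebraMap r =>
      intro x hx
      rw [← Algebra.smul_def]
      exact M.smul_mem r hx
    | ι v => exact hv v
    | add a b ha hb => intro x hx; rw [add_mul]; exact M.add_mem (ha x hx) (hb x hx)
    | mul a b ha hb => intro x hx; rw [mul_assoc]; exact ha _ (hb x hx)
  rw [eq_top_iff]
  intro x _
  simpa using hy x 1 h1

theorem prodE_mul_clPi {T : List ℕ} (hT : T ≠ []) :
    prodE Q e T * clPi Q e f n = 0 := by
  induction T with
  | nil => exact absurd rfl hT
  | cons t T' ih =>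
    have ht : prodE Q e (t :: T') = ι Q (e t) * prodE Q e T' := by simp [prodE]
    rcases eq_or_ne T' [] with rfl | hT'
    · have : prodE Q e ([] : List ℕ) = 1 := by simp [prodE]
      rw [ht, this, mul_one]
      rcases lt_or_ge t n with h | h
      · exact e_mul_clPi H h
      · rw [H.hetop t h, map_zero, zero_mul]
    · rw [ht, mul_assoc, ih hT', mul_zero]

theorem clPi_mul_prodF {S : List ℕ} (hS : S ≠ []) :
    clPi Q e f n * prodF Q f S = 0 := by
  obtain ⟨s, S', rfl⟩ := List.exists_cons_of_ne_nil hS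
  have hs : prodF Q f (s :: S') = ι Q (f s) * prodF Q f S' := by simp [prodF]
  have h0 : clPi Q e f n * ι Q (f s) = 0 := by
    rcases lt_or_ge s n with h | h
    · exact clPi_mul_f H h
    · rw [H.hftop s h, map_zero, mul_zero]
  rw [hs, ← mul_assoc, h0, zero_mul]

theorem crux (x : CliffordAlgebra Q) :
    ∃ c : ℝ, clPi Q e f n * x * clPi Q e f n = c • clPi Q e f n := by
  have hmem : clPi Q e f n * x * clPi Q e f n ∈ (ℝ ∙ clPi Q e f n) := by
    have hx : x ∈ Submodule.span ℝ (genSet Q e f) := by rw [span_gen H]; trivial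
    induction hx using Submodule.span_induction with
    | mem x hx =>
      obtain ⟨S, T, rfl⟩ := hx
      rcases eq_or_ne S [] with rfl | hS
      · have hSone : prodF Q f ([] : List ℕ) = 1 := by simp [prodF]
        rcases eq_or_ne T [] with rfl | hT
        · have hTone : prodE Q e ([] : List ℕ) = 1 := by simp [prodE]
          rw [hSone, hTone, mul_one, mul_one, clPi_idem H le_rfl]
          exact Submodule.mem_span_singleton.mpr ⟨1, one_smul _ _⟩
        · rw [hSone, one_mul, mul_assoc, prodE_mul_clPi H hT, mul_zero]
          exact Submodule.zero_mem _
      · rw [mul_assoc, ← mul_assoc, ← mul_assoc, clPi_mul_prodF H hS, zero_mul, zero_mul]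
        exact Submodule.zero_mem _
    | zero =>
      rw [mul_zero, zero_mul]; exact Submodule.zero_mem _
    | add a b _ _ ha hb =>
      rw [mul_add, add_mul]; exact Submodule.add_mem _ ha hb
    | smul c a _ ha =>
      rw [mul_smul_comm, smul_mul_assoc]; exact Submodule.smul_mem _ c ha
  obtain ⟨c, hc⟩ := Submodule.mem_span_singleton.mp hmem
  exact ⟨c, hc.symm⟩

end Lemmas2

section ModuleLemmas
variable {𝒮 : Type*} [AddCommGroup 𝒮] [Module ℝ 𝒮]
  [Module (CliffordAlgebra Q) 𝒮] [IsScalarTower ℝ (CliffordAlgebra Q) 𝒮]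
include H

theorem hefe {m : ℕ} (hm : m < n) :
    (ι Q (e m) * ι Q (f m)) * ι Q (e m) = ι Q (e m) := by
  have hsub : ι Q (e m) * ι Q (f m) = 1 - ι Q (f m) * ι Q (e m) := by
    rw [eq_sub_iff_add_eq]; exact hef_one H hm
  rw [hsub, sub_mul, one_mul, mul_assoc, H.he0 m, mul_zero, sub_zero]

theorem clPi_key {m : ℕ} (hm : m < n) :
    clPi Q e f m = clPi Q e f (m+1)
      + ι Q (f m) * (clPi Q e f (m+1) * ι Q (e m)) := by
  have h : clPi Q e f (m+1) + ι Q (f m) * (clPi Q e f (m+1) * ι Q (e m))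
      = clPi Q e f m := by
    rw [clPi, mul_assoc (ι Q (e m) * ι Q (f m)) _ (ι Q (e m)),
      ← e_comm_clPi H (le_refl m),
      ← mul_assoc (ι Q (e m) * ι Q (f m)) (ι Q (e m)), hefe H hm,
      ← mul_assoc, ← add_mul, hef_one H hm, one_mul]
  exact h.symm

theorem nontriv_aux :
    ∀ m, m ≤ n → (∀ ψ : 𝒮, clPi Q e f m • ψ = 0) → ∀ ψ : 𝒮, ψ = 0 := by
  intro m
  induction m with
  | zero =>
    intro _ h ψ
    have := h ψ
    rwa [clPi, one_smul] at this
  | succ m ih =>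
    intro hm h
    refine ih (by omega) ?_
    intro ψ
    rw [clPi_key H (by omega : m < n), add_smul, h ψ, zero_add, mul_smul, mul_smul,
      h (ι Q (e m) • ψ), smul_zero]

theorem exists_nonzero [IsSimpleModule (CliffordAlgebra Q) 𝒮] :
    ∃ ψ : 𝒮, clPi Q e f n • ψ ≠ 0 := by
  by_contra hc
  push_neg at hc
  have hall : ∀ ψ : 𝒮, ψ = 0 := nontriv_aux H n le_rfl hc
  have := IsSimpleModule.nontrivial (CliffordAlgebra Q) 𝒮
  obtain ⟨x, y, hxy⟩ := this
  exact hxy ((hall x).trans (hall y).symm)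

theorem clPi_fix {ψ : 𝒮} (hψ : ∀ i, i < n → ι Q (e i) • ψ = 0) :
    clPi Q e f n • ψ = ψ := by
  suffices h : ∀ m, m ≤ n → clPi Q e f m • ψ = ψ from h n le_rfl
  intro m
  induction m with
  | zero => intro _; rw [clPi, one_smul]
  | succ m ih =>
    intro hm
    have hp : ι Q (e m) * ι Q (f m) = 1 - ι Q (f m) * ι Q (e m) := by
      rw [eq_sub_iff_add_eq]; exact hef_one H (by omega)
    rw [clPi, mul_smul, ih (by omega), hp, sub_smul, one_smul, mul_smul,
      hψ m (by omega), smul_zero, sub_zero]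

theorem abstract_main [IsSimpleModule (CliffordAlgebra Q) 𝒮]
    {E : Submodule ℝ W}
    (hEspan : (E : Set W) ⊆ Submodule.span ℝ {x : W | ∃ i, i < n ∧ x = e i})
    (heE : ∀ i, i < n → e i ∈ E) :
    ∃ φ : 𝒮, φ ≠ 0 ∧
      (∀ w ∈ E, ι Q w • φ = 0) ∧
      ∀ ψ : 𝒮, (∀ w ∈ E, ι Q w • ψ = 0) → ∃ c : ℝ, ψ = c • φ := by
  obtain ⟨ψ₀, hψ₀⟩ := exists_nonzero H (𝒮 := 𝒮)
  refine ⟨clPi Q e f n • ψ₀, hψ₀, ?_, ?_⟩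
  · intro w hw
    have hz : ι Q w * clPi Q e f n = 0 := by
      have hmem := hEspan hw
      have hker : Submodule.span ℝ {x : W | ∃ i, i < n ∧ x = e i} ≤
          LinearMap.ker ((LinearMap.mulRight ℝ (clPi Q e f n)).comp (ι Q)) := by
        rw [Submodule.span_le]
        rintro x ⟨i, hi, rfl⟩
        simp only [SetLike.mem_coe, LinearMap.mem_ker, LinearMap.comp_apply,
          LinearMap.mulRight_apply]
        exact e_mul_clPi H hi
      have := hker hmem
      simpa using this
    rw [← mul_smul, hz, zero_smul]
  · intro ψ hψ
    have hψ' : ∀ i, i < n → ι Q (e i) • ψ = 0 := fun i hi => hψ (e i) (heE i hi)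
    have hfix := clPi_fix H hψ'
    have hspan : Submodule.span (CliffordAlgebra Q) {clPi Q e f n • ψ₀} = ⊤ := by
      rcases eq_bot_or_eq_top (Submodule.span (CliffordAlgebra Q) {clPi Q e f n • ψ₀})
        with h | h
      · exfalso
        apply hψ₀
        have hm : clPi Q e f n • ψ₀ ∈
            Submodule.span (CliffordAlgebra Q) {clPi Q e f n • ψ₀} :=
          Submodule.mem_span_singleton_self _
        rw [h] at hm
        simpa using hm
      · exact h
    have hψmem : ψ ∈ Submodule.span (CliffordAlgebra Q) {clPi Q e f n • ψ₀} := by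
      rw [hspan]; trivial
    obtain ⟨x, hx⟩ := Submodule.mem_span_singleton.mp hψmem
    obtain ⟨c, hc⟩ := crux H x
    refine ⟨c, ?_⟩
    calc ψ = clPi Q e f n • ψ := hfix.symm
      _ = clPi Q e f n • (x • (clPi Q e f n • ψ₀)) := by rw [hx]
      _ = (clPi Q e f n * x * clPi Q e f n) • ψ₀ := by rw [mul_smul, mul_smul]
      _ = (c • clPi Q e f n) • ψ₀ := by rw [hc]
      _ = c • (clPi Q e f n • ψ₀) := by rw [smul_assoc]

end ModuleLemmas
end Stmt13Aux


open Stmt13Aux in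
theorem stmt13_pre {W : Type*} [AddCommGroup W] [Module ℝ W] [FiniteDimensional ℝ W]
    (B : LinearMap.BilinForm ℝ W) (hsymm : B.IsSymm) (hnd : B.Nondegenerate)
    (E : Submodule ℝ W)
    (hLag : (E : Set W) = {w : W | ∀ e ∈ E, B w e = 0})
    (Q : QuadraticForm ℝ W)
    (hQval : ∀ v, Q v = (1/2 : ℝ) * (B v v))
    (hpolar : ∀ v w, QuadraticMap.polar Q v w = B v w)
    (𝒮 : Type*) [AddCommGroup 𝒮] [Module ℝ 𝒮]
    [Module (CliffordAlgebra Q) 𝒮]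
    [IsScalarTower ℝ (CliffordAlgebra Q) 𝒮]
    [IsSimpleModule (CliffordAlgebra Q) 𝒮] :
    ∃ φ : 𝒮, φ ≠ 0 ∧
      (∀ w ∈ E, CliffordAlgebra.ι Q w • φ = 0) ∧
      ∀ ψ : 𝒮, (∀ w ∈ E, CliffordAlgebra.ι Q w • ψ = 0) →
        ∃ c : ℝ, ψ = c • φ := by
  classical
  have hsymm' : ∀ x y : W, B x y = B y x := fun x y => (hsymm.eq x y).symm ▸ (hsymm.eq y x) ▸ rfl
  have hEiso : ∀ x ∈ E, ∀ y ∈ E, B x y = 0 := by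
    intro x hx y hy
    have hx' : x ∈ {w : W | ∀ e ∈ E, B w e = 0} := hLag ▸ hx
    exact hx' y hy
  set n := Module.finrank ℝ E with hn
  set b := Module.finBasis ℝ E with hb
  have hli : LinearIndependent ℝ (fun i : Fin n => ((b i : W))) :=
    b.linearIndependent.map' E.subtype (Submodule.ker_subtype E)
  have hlis : LinearIndepOn ℝ id (Set.range (fun i : Fin n => ((b i : W)))) :=
    (linearIndepOn_id_range_iff hli.injective).mpr hli
  set bW := Module.Basis.extend hlis with hbW
  set d := B.dualBasis hnd bW with hd
  set e : ℕ → W := fun i => if h : i < n then (b ⟨i, h⟩ : W) else 0 with he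
  have hbmem : ∀ (i : Fin n), ((b i : W)) ∈ hlis.extend (Set.subset_univ _) :=
    fun i => hlis.subset_extend _ ⟨i, rfl⟩
  set f' : ℕ → W := fun i =>
    if h : i < n then d ⟨(b ⟨i, h⟩ : W), hbmem ⟨i, h⟩⟩ else 0 with hf'
  set f : ℕ → W := fun i =>
    f' i - (2⁻¹ : ℝ) • ∑ j ∈ Finset.range n, B (f' i) (f' j) • e j with hf
  have heE : ∀ i, e i ∈ E := by
    intro i
    by_cases h : i < n
    · simp only [he, dif_pos h]; exact (b ⟨i, h⟩).2
    · simp only [he, dif_neg h]; exact E.zero_mem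
  have hBee : ∀ i j, B (e i) (e j) = 0 := fun i j => hEiso _ (heE i) _ (heE j)
  have hBf'e : ∀ i j, B (f' i) (e j) = if i = j ∧ i < n then 1 else 0 := by
    intro i j
    by_cases hi : i < n
    · by_cases hj : j < n
      · simp only [hf', he, dif_pos hi, dif_pos hj]
        have hbWj : bW ⟨(b ⟨j, hj⟩ : W), hbmem ⟨j, hj⟩⟩ = (b ⟨j, hj⟩ : W) :=
          Module.Basis.extend_apply_self _ _
        rw [← hbWj, hd, B.apply_dualBasis_left hnd bW]
        by_cases hij : i = j
        · subst hij
          simp [hi]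
        · rw [if_neg, if_neg (by tauto)]
          intro hcontra
          apply hij
          have h1 := congrArg Subtype.val hcontra
          have h2 : b ⟨j, hj⟩ = b ⟨i, hi⟩ := Subtype.ext h1
          have h3 := b.injective h2
          exact (congrArg Fin.val h3).symm
      · have hij : ¬(i = j ∧ i < n) := by omega
        simp only [he, dif_neg hj, map_zero, if_neg hij]
    · have hij : ¬(i = j ∧ i < n) := by omega
      simp only [hf', dif_neg hi, map_zero, LinearMap.zero_apply, if_neg hij]
  have hBef' : ∀ i j, B (e i) (f' j) = if i = j ∧ i < n then 1 else 0 := by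
    intro i j
    rw [hsymm' (e i) (f' j), hBf'e j i]
    by_cases hij : i = j
    · subst hij; rfl
    · rw [if_neg (by tauto), if_neg (by tauto)]
  have hBef : ∀ i j, B (e i) (f j) = if i = j ∧ i < n then 1 else 0 := by
    intro i j
    rw [hf]
    simp only [map_sub, map_smul, map_sum, smul_eq_mul, hBee, mul_zero,
      Finset.sum_const_zero, sub_zero]
    exact hBef' i j
  have hf'top : ∀ i, n ≤ i → f' i = 0 := by
    intro i h
    simp only [hf', dif_neg (Nat.not_lt.mpr h)]
  have hftop : ∀ i, n ≤ i → f i = 0 := by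
    intro i h
    rw [hf]
    simp only [hf'top i h, map_zero, LinearMap.zero_apply, zero_smul,
      Finset.sum_const_zero, smul_zero, sub_zero]
  have expand_left : ∀ (v : W) (i : ℕ), B (f i) v
      = B (f' i) v - 2⁻¹ * ∑ k ∈ Finset.range n, B (f' i) (f' k) * B (e k) v := by
    intro v i
    rw [hf]
    simp only [map_sub, map_smul, map_sum, LinearMap.sub_apply, LinearMap.smul_apply,
      LinearMap.sum_apply, smul_eq_mul, Finset.mul_sum]
  have expand_right : ∀ (u : W) (j : ℕ), B u (f j)
      = B u (f' j) - 2⁻¹ * ∑ l ∈ Finset.range n, B (f' j) (f' l) * B u (e l) := by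
    intro u j
    rw [hf]
    simp only [map_sub, map_smul, map_sum, smul_eq_mul, Finset.mul_sum]
  have sum_e_right : ∀ (c : ℕ → ℝ) (i : ℕ), i < n →
      ∑ l ∈ Finset.range n, c l * B (f' i) (e l) = c i := by
    intro c i hi
    rw [Finset.sum_eq_single i]
    · rw [hBf'e i i, if_pos ⟨rfl, hi⟩, mul_one]
    · intro l _ hl
      rw [hBf'e i l, if_neg (by tauto), mul_zero]
    · intro hnot
      exact absurd (Finset.mem_range.mpr hi) hnot
  have sum_e_left : ∀ (c : ℕ → ℝ) (j : ℕ), j < n →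
      ∑ k ∈ Finset.range n, c k * B (e k) (f j) = c j := by
    intro c j hj
    rw [Finset.sum_eq_single j]
    · rw [hBef j j, if_pos ⟨rfl, hj⟩, mul_one]
    · intro k _ hk
      rw [hBef k j, if_neg (by tauto), mul_zero]
    · intro hnot
      exact absurd (Finset.mem_range.mpr hj) hnot
  have hBff : ∀ i j, B (f i) (f j) = 0 := by
    intro i j
    rcases Nat.lt_or_ge i n with hi | hi
    swap
    · rw [hftop i hi]; simp
    rcases Nat.lt_or_ge j n with hj | hj
    swap
    · rw [hftop j hj]; simp
    rw [expand_left (f j) i]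
    have h2 : ∑ k ∈ Finset.range n, B (f' i) (f' k) * B (e k) (f j) = B (f' i) (f' j) :=
      sum_e_left (fun k => B (f' i) (f' k)) j hj
    have h1 : B (f' i) (f j) = B (f' i) (f' j) - 2⁻¹ * B (f' j) (f' i) := by
      rw [expand_right (f' i) j, sum_e_right (fun l => B (f' j) (f' l)) i hi]
    rw [h1, h2, hsymm' (f' j) (f' i)]
    ring
  have hbe : ∀ k : Fin n, ((b k : W)) = e (k : ℕ) := by
    intro k
    simp only [he, dif_pos k.isLt]
    rfl
  have hEspan2 : Submodule.span ℝ (Set.range fun i : Fin n => ((b i : W))) = E := by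
    have h1 : (Set.range fun i : Fin n => ((b i : W))) = E.subtype '' Set.range b := by
      rw [← Set.range_comp]; rfl
    rw [h1, ← Submodule.map_span, b.span_eq, Submodule.map_top, Submodule.range_subtype]
  have hspanW : ∀ v : W, v ∈ Submodule.span ℝ (Set.range e ∪ Set.range f) := by
    set V := Submodule.span ℝ (Set.range e ∪ Set.range f) with hV
    suffices hVtop : V = ⊤ by intro v; rw [hVtop]; trivial
    by_contra hne
    have hlt : V < ⊤ := lt_of_le_of_ne le_top hne
    obtain ⟨φ, hφ0, hφ⟩ := Submodule.exists_dual_map_eq_bot_of_lt_top hlt inferInstance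
    set w := (B.toDual hnd).symm φ with hw
    have hBw : ∀ v : W, B w v = φ v := fun v =>
      LinearMap.BilinForm.apply_toDual_symm_apply (B := B) (hB := hnd) φ v
    have hφV : ∀ v ∈ V, φ v = 0 := by
      intro v hv
      have hm : φ v ∈ V.map φ := Submodule.mem_map_of_mem hv
      rw [hφ] at hm
      simpa using hm
    have hwe : ∀ i, B w (e i) = 0 := fun i =>
      (hBw _).trans (hφV _ (Submodule.subset_span (Or.inl ⟨i, rfl⟩)))
    have hwf : ∀ i, B w (f i) = 0 := fun i =>
      (hBw _).trans (hφV _ (Submodule.subset_span (Or.inr ⟨i, rfl⟩)))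
    have hwE : w ∈ E := by
      have hker : E ≤ LinearMap.ker (B w) := by
        rw [← hEspan2, Submodule.span_le]
        rintro x ⟨i, rfl⟩
        simp only [SetLike.mem_coe, LinearMap.mem_ker]
        rw [hbe i]
        exact hwe _
      rw [← SetLike.mem_coe, hLag]
      intro x hx
      exact hker hx
    set U : E := ⟨w, hwE⟩ with hU
    have hwsum : w = ∑ k : Fin n, b.repr U k • ((b k : W)) := by
      have hs := b.sum_repr U
      calc w = ((U : E) : W) := rfl
        _ = ((∑ k : Fin n, b.repr U k • b k : E) : W) := by rw [hs]
        _ = ∑ k : Fin n, b.repr U k • ((b k : W)) := by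
            push_cast
            rfl
    have hcoord : ∀ i : Fin n, b.repr U i = 0 := by
      intro i
      have h0 : B w (f (i : ℕ)) = 0 := hwf _
      have h1 : B w (f (i : ℕ)) = b.repr U i := by
        rw [hwsum]
        simp only [map_sum, map_smul, LinearMap.sum_apply, LinearMap.smul_apply, smul_eq_mul]
        rw [Finset.sum_eq_single i]
        · rw [hbe i, hBef, if_pos ⟨rfl, i.isLt⟩, mul_one]
        · intro k _ hk
          rw [hbe k, hBef, if_neg (by simp; omega), mul_zero]
        · intro hnot
          exact absurd (Finset.mem_univ i) hnot
      rw [← h1, h0]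
    have hU0 : U = 0 := by
      have : b.repr U = 0 := by
        ext i
        simpa using hcoord i
      simpa using b.repr.map_eq_zero_iff.mp this
    have hw0 : w = 0 := by
      have := congrArg (fun u : E => (u : W)) hU0
      exact this
    apply hφ0
    have hφw : φ = B.toDual hnd w := (LinearEquiv.apply_symm_apply _ _).symm
    rw [hφw, hw0, map_zero]
  have H : Stmt13Aux.ClSetup Q n e f := by
    constructor
    · intro i j
      have h := CliffordAlgebra.ι_mul_ι_add_swap (Q := Q) (e i) (e j)
      rw [hpolar, hBee, map_zero] at h
      exact eq_neg_of_add_eq_zero_left h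
    · intro i j
      have h := CliffordAlgebra.ι_mul_ι_add_swap (Q := Q) (f i) (f j)
      rw [hpolar, hBff, map_zero] at h
      exact eq_neg_of_add_eq_zero_left h
    · intro i j
      have h := CliffordAlgebra.ι_mul_ι_add_swap (Q := Q) (e i) (f j)
      rw [hpolar, hBef] at h
      rw [← h]
      abel
    · intro i
      rw [CliffordAlgebra.ι_sq_scalar, hQval, hBee, mul_zero, map_zero]
    · intro i
      rw [CliffordAlgebra.ι_sq_scalar, hQval, hBff, mul_zero, map_zero]
    · intro i hi
      simp only [he, dif_neg (Nat.not_lt.mpr hi)]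
    · exact hftop
    · exact hspanW
  have hEsub : (E : Set W) ⊆
      (Submodule.span ℝ {x : W | ∃ i, i < n ∧ x = e i} : Set W) := by
    rw [← hEspan2]
    intro x hx
    exact Submodule.span_mono (by rintro y ⟨i, rfl⟩; exact ⟨(i : ℕ), i.isLt, hbe i⟩) hx
  obtain ⟨φ, h1, h2, h3⟩ :=
    Stmt13Aux.abstract_main (𝒮 := 𝒮) H hEsub (fun i _ => heE i)
  exact ⟨φ, h1, h2, h3⟩

/-- Let `(W,B)` be a finite-dimensional split real quadratic space, `𝒮` an
irreducible module over `Cl(W)` and `E ⊂ W` a Lagrangian subspace.  Then the subspace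
`𝒮^E = {φ : ρ(w)φ = 0 ∀ w ∈ E}` is one-dimensional: it contains a nonzero `φ`, and every
element of it is a real multiple of `φ`.  (Convention `Q = (1/2) • B`.) -/
theorem stmt13 {W : Type*} [AddCommGroup W] [Module ℝ W] [FiniteDimensional ℝ W]
    (B : LinearMap.BilinForm ℝ W) (hsymm : B.IsSymm) (hnd : B.Nondegenerate)
    (E : Submodule ℝ W)
    (hLag : (E : Set W) = {w : W | ∀ e ∈ E, B w e = 0})
    (𝒮 : Type*) [AddCommGroup 𝒮] [Module ℝ 𝒮]
    [Module (CliffordAlgebra (((1/2 : ℝ) • B).toQuadraticMap)) 𝒮]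
    [IsScalarTower ℝ (CliffordAlgebra (((1/2 : ℝ) • B).toQuadraticMap)) 𝒮]
    [IsSimpleModule (CliffordAlgebra (((1/2 : ℝ) • B).toQuadraticMap)) 𝒮] :
    ∃ φ : 𝒮, φ ≠ 0 ∧
      (∀ w ∈ E, CliffordAlgebra.ι (((1/2 : ℝ) • B).toQuadraticMap) w • φ = 0) ∧
      ∀ ψ : 𝒮, (∀ w ∈ E, CliffordAlgebra.ι (((1/2 : ℝ) • B).toQuadraticMap) w • ψ = 0) →
        ∃ c : ℝ, ψ = c • φ := by
  have hsymm' : ∀ x y : W, B x y = B y x := fun x y => (hsymm.eq x y).symm ▸ (hsymm.eq y x) ▸ rfl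
  refine stmt13_pre B hsymm hnd E hLag _ ?_ ?_ 𝒮
  · intro v
    simp [LinearMap.BilinMap.toQuadraticMap_apply]
  · intro v w
    rw [LinearMap.BilinMap.polar_toQuadraticMap]
    simp only [LinearMap.smul_apply, smul_eq_mul]
    rw [hsymm' w v]
    ring
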